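/- arXiv:2510.20552 — 2 statements merged into one kernel-verified Lean document; each statement's English description precedes it below -/
import Mathlib

section
/- Let D be a symmetric positive definite d×d matrix with smallest eigenvalue at least α > 0, and let σ = D^{1/2} be its principal (symmetric positive definite) square root. If X is the unique symmetric matrix solving σX + Xσ = D' for a symmetric matrix D', then every entry of X satisfies |X_{ij}| ≤ (d²/(2√α)) · max_{m,n} |D'_{mn}|. -/
open Matrix Finset

/-- Entrywise bound for the solution of the Sylvester equation `σX + Xσ = D'`,
where `σ = D^{1/2}` is the principal square root of a symmetric positive
definite matrix `D` whose smallest eigenvalue is at least `α > 0`. -/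
theorem sylvester_solution_entry_bound
    (d : ℕ) (α : ℝ) (hα : 0 < α)
    (D σ D' X : Matrix (Fin d) (Fin d) ℝ)
    (hDsymm : D.IsSymm) (hDpos : D.PosDef)
    (hell : ∀ ξ : Fin d → ℝ, α * (ξ ⬝ᵥ ξ) ≤ ξ ⬝ᵥ D.mulVec ξ)
    (hσsymm : σ.IsSymm) (hσpos : σ.PosDef) (hσsq : σ * σ = D)
    (hD'symm : D'.IsSymm) (hXsymm : X.IsSymm)
    (hX : σ * X + X * σ = D')
    (M : ℝ) (hM : ∀ m n, |D' m n| ≤ M) :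
    ∀ i j, |X i j| ≤ ((d : ℝ)^2 / (2 * Real.sqrt α)) * M := by
  intro i j
  have hM0 : 0 ≤ M := (abs_nonneg _).trans (hM i j)
  have hsa : 0 < Real.sqrt α := Real.sqrt_pos.mpr hα
  have hσh : σ.IsHermitian := hσpos.1
  set U : Matrix (Fin d) (Fin d) ℝ := (hσh.eigenvectorUnitary : Matrix (Fin d) (Fin d) ℝ) with hU
  set μ : Fin d → ℝ := hσh.eigenvalues with hμdef
  have hUsU : star U * U = 1 := Matrix.mem_unitaryGroup_iff'.mp hσh.eigenvectorUnitary.2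
  have hUUs : U * star U = 1 := Matrix.mem_unitaryGroup_iff.mp hσh.eigenvectorUnitary.2
  -- columns are unit vectors
  have hcolsq : ∀ k, ∑ m, (U m k) ^ 2 = 1 := by
    intro k
    have h := congrFun (congrFun hUsU k) k
    simpa [Matrix.mul_apply, Matrix.one_apply, Matrix.star_apply, sq] using h
  have hrowsq : ∀ k, ∑ m, (U k m) ^ 2 = 1 := by
    intro k
    have h := congrFun (congrFun hUUs k) k
    simpa [Matrix.mul_apply, Matrix.one_apply, Matrix.star_apply, sq] using h
  -- abs column/row sums are at most √d
  have habs : ∀ f : Fin d → ℝ, (∑ m, f m ^ 2 = 1) → ∑ m, |f m| ≤ Real.sqrt d := by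
    intro f hf
    have h1 : (∑ m, |f m|) ^ 2 ≤ (d : ℝ) * ∑ m, |f m| ^ 2 := by
      have := sq_sum_le_card_mul_sum_sq (s := (univ : Finset (Fin d))) (f := fun m => |f m|)
      simpa using this
    have h2 : ∑ m, |f m| ^ 2 = 1 := by simpa [sq_abs] using hf
    rw [h2, mul_one] at h1
    have h3 : 0 ≤ ∑ m, |f m| := Finset.sum_nonneg fun m _ => abs_nonneg _
    calc ∑ m, |f m| = Real.sqrt ((∑ m, |f m|) ^ 2) := (Real.sqrt_sq h3).symm
      _ ≤ Real.sqrt d := Real.sqrt_le_sqrt h1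
  -- eigenvalue lower bound
  have hμa : ∀ k, Real.sqrt α ≤ μ k := by
    intro k
    have hpos : 0 < μ k := hσpos.eigenvalues_pos k
    have hv := hσh.mulVec_eigenvectorBasis k
    set v : Fin d → ℝ := ⇑(hσh.eigenvectorBasis k) with hvdef
    have hvv : v ⬝ᵥ v = 1 := by
      have := hcolsq k
      simp only [sq] at this; exact this
    have hDv : v ⬝ᵥ D.mulVec v = μ k ^ 2 * (v ⬝ᵥ v) := by
      rw [← hσsq, ← Matrix.mulVec_mulVec, hv, Matrix.mulVec_smul, hv, smul_smul]
      simp [dotProduct_smul, sq, mul_assoc, hμdef]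
    have hle := hell v
    rw [hDv, hvv, mul_one, mul_one] at hle
    have : Real.sqrt α ≤ Real.sqrt (μ k ^ 2) := Real.sqrt_le_sqrt hle
    rwa [Real.sqrt_sq hpos.le] at this
  -- spectral theorem
  have hspec : σ = U * Matrix.diagonal μ * star U := by
    have := hσh.spectral_theorem
    simpa [Function.comp] using this
  set Λ := Matrix.diagonal μ with hΛ
  have hUσ : star U * σ = Λ * star U := by
    rw [hspec, ← Matrix.mul_assoc, ← Matrix.mul_assoc, hUsU, Matrix.one_mul]
  have hσU : σ * U = U * Λ := by
    rw [hspec, Matrix.mul_assoc, hUsU, Matrix.mul_one]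
  set R := star U * X * U with hR
  set H := star U * D' * U with hH
  have keyM : Λ * R + R * Λ = H := by
    have h1 : star U * (σ * X) * U = Λ * R := by
      rw [hR, ← Matrix.mul_assoc (star U) σ X, hUσ]
      simp [Matrix.mul_assoc]
    have h2 : star U * (X * σ) * U = R * Λ := by
      have e : star U * (X * σ) * U = star U * X * (σ * U) := by
        simp [Matrix.mul_assoc]
      rw [e, hσU, hR]
      simp [Matrix.mul_assoc]
    have h := congrArg (fun A => star U * A * U) hX
    simp only [Matrix.mul_add, Matrix.add_mul] at h
    rw [h1, h2] at h
    exact h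
  have hXUR : X = U * R * star U := by
    rw [hR, ← Matrix.mul_assoc, ← Matrix.mul_assoc, hUUs, Matrix.one_mul,
      Matrix.mul_assoc, hUUs, Matrix.mul_one]
  -- bound on H entries
  have hHb : ∀ k l, |H k l| ≤ (d : ℝ) * M := by
    intro k l
    have hexp : H k l = ∑ n, (∑ m, U m k * D' m n) * U n l := by
      simp [hH, Matrix.mul_apply, Matrix.star_apply]
    rw [hexp]
    calc |∑ n, (∑ m, U m k * D' m n) * U n l|
        ≤ ∑ n, |(∑ m, U m k * D' m n) * U n l| := Finset.abs_sum_le_sum_abs _ _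
      _ ≤ ∑ n, (∑ m, |U m k| * M) * |U n l| := by
          apply Finset.sum_le_sum
          intro n _
          rw [abs_mul]
          apply mul_le_mul_of_nonneg_right _ (abs_nonneg _)
          calc |∑ m, U m k * D' m n| ≤ ∑ m, |U m k * D' m n| :=
                Finset.abs_sum_le_sum_abs _ _
            _ ≤ ∑ m, |U m k| * M := by
                apply Finset.sum_le_sum
                intro m _
                rw [abs_mul]
                exact mul_le_mul_of_nonneg_left (hM m n) (abs_nonneg _)
      _ = (∑ m, |U m k|) * M * ∑ n, |U n l| := by
          rw [← Finset.mul_sum, ← Finset.sum_mul]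
      _ ≤ Real.sqrt d * M * Real.sqrt d := by
          apply mul_le_mul
          · exact mul_le_mul_of_nonneg_right (habs _ (hcolsq k)) hM0
          · exact habs _ (hcolsq l)
          · exact Finset.sum_nonneg fun m _ => abs_nonneg _
          · positivity
      _ = (d : ℝ) * M := by
          rw [mul_comm (Real.sqrt d) M, mul_assoc, Real.mul_self_sqrt (Nat.cast_nonneg d)]
          ring
  -- bound on R entries
  have hRb : ∀ k l, |R k l| ≤ (d : ℝ) * M / (2 * Real.sqrt α) := by
    intro k l
    have hkl : 2 * Real.sqrt α ≤ μ k + μ l := by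
      have := hμa k; have := hμa l; linarith
    have hklpos : 0 < μ k + μ l := by linarith
    have heq : R k l = H k l / (μ k + μ l) := by
      have h := congrFun (congrFun keyM k) l
      simp only [Matrix.add_apply, hΛ, Matrix.diagonal_mul, Matrix.mul_diagonal] at h
      rw [eq_div_iff hklpos.ne']
      linear_combination h
    rw [heq, abs_div, abs_of_pos hklpos]
    exact div_le_div₀ (by positivity) (hHb k l) (by positivity) hkl
  -- final bound
  have hXexp : X i j = ∑ l, (∑ k, U i k * R k l) * U j l := by
    conv_lhs => rw [hXUR]
    simp [Matrix.mul_apply, Matrix.star_apply]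
  set B := (d : ℝ) * M / (2 * Real.sqrt α) with hB
  have hB0 : 0 ≤ B := by positivity
  have hfinal : |X i j| ≤ B * Real.sqrt d * Real.sqrt d := by
    rw [hXexp]
    calc |∑ l, (∑ k, U i k * R k l) * U j l|
        ≤ ∑ l, |(∑ k, U i k * R k l) * U j l| := Finset.abs_sum_le_sum_abs _ _
      _ ≤ ∑ l, (∑ k, |U i k| * B) * |U j l| := by
          apply Finset.sum_le_sum
          intro l _
          rw [abs_mul]
          apply mul_le_mul_of_nonneg_right _ (abs_nonneg _)
          calc |∑ k, U i k * R k l| ≤ ∑ k, |U i k * R k l| :=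
                Finset.abs_sum_le_sum_abs _ _
            _ ≤ ∑ k, |U i k| * B := by
                apply Finset.sum_le_sum
                intro k _
                rw [abs_mul]
                exact mul_le_mul_of_nonneg_left (hRb k l) (abs_nonneg _)
      _ = (∑ k, |U i k|) * B * ∑ l, |U j l| := by
          rw [← Finset.mul_sum, ← Finset.sum_mul]
      _ ≤ Real.sqrt d * B * Real.sqrt d := by
          apply mul_le_mul
          · exact mul_le_mul_of_nonneg_right (habs _ (hrowsq i)) hB0
          · exact habs _ (hrowsq j)
          · exact Finset.sum_nonneg fun m _ => abs_nonneg _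
          · positivity
      _ = B * Real.sqrt d * Real.sqrt d := by ring
  have hsq : B * Real.sqrt d * Real.sqrt d = ((d : ℝ)^2 / (2 * Real.sqrt α)) * M := by
    rw [mul_assoc, Real.mul_self_sqrt (Nat.cast_nonneg d), hB]
    field_simp
  rwa [hsq] at hfinal
end

section
/- Let ε ≠ 0 be constant and a, b : ℝ → ℝ be C¹ with a(x₁) ≥ a₀ > 0, b(x₂) ≥ b₀ > 0, and a(x₁)b(x₂) − ε² ≥ δ > 0 for all (x₁,x₂) ∈ ℝ². Define σ(x) = [[a(x₁), ε],[ε, b(x₂)]] and D = σσᵀ. Then ∇·D − 2σ(∇·σᵀ) = −ε·(b'(x₂), a'(x₁)); in particular, if a' or b' is not identically zero, the identity ∇·D = 2σ∇·σᵀ fails at some point. -/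
open Matrix Finset

/-- Separable cross-coupled diffusion tensor: for
`σ(x) = [[a(x₁), ε],[ε, b(x₂)]]` and `D = σσᵀ`, the defect
`∇·D − 2σ(∇·σᵀ)` equals `−ε(b'(x₂), a'(x₁))`; in particular, if `a'` or `b'`
is not identically zero, the structural identity fails at some point. -/
theorem structural_identity_fails_separable
    (ε a₀ b₀ δ : ℝ) (hε : ε ≠ 0) (ha₀ : 0 < a₀) (hb₀ : 0 < b₀) (hδ : 0 < δ)
    (a b : ℝ → ℝ) (ha : ContDiff ℝ 1 a) (hb : ContDiff ℝ 1 b)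
    (haa : ∀ s, a₀ ≤ a s) (hbb : ∀ s, b₀ ≤ b s)
    (hdet : ∀ x : Fin 2 → ℝ, δ ≤ a (x 0) * b (x 1) - ε^2)
    (σ D : (Fin 2 → ℝ) → Matrix (Fin 2) (Fin 2) ℝ)
    (hσ : ∀ x, σ x = !![a (x 0), ε; ε, b (x 1)])
    (hD : ∀ x, D x = σ x * (σ x)ᵀ) :
    (∀ (x : Fin 2 → ℝ),
      (∑ j : Fin 2, fderiv ℝ (fun y => D y 0 j) x (Pi.single j 1))
          - 2 * (∑ l : Fin 2, σ x 0 l *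
              (∑ j : Fin 2, fderiv ℝ (fun y => σ y j l) x (Pi.single j 1)))
        = -ε * deriv b (x 1) ∧
      (∑ j : Fin 2, fderiv ℝ (fun y => D y 1 j) x (Pi.single j 1))
          - 2 * (∑ l : Fin 2, σ x 1 l *
              (∑ j : Fin 2, fderiv ℝ (fun y => σ y j l) x (Pi.single j 1)))
        = -ε * deriv a (x 0)) ∧
    ((∃ s, deriv a s ≠ 0) ∨ (∃ s, deriv b s ≠ 0) →
      ∃ (x : Fin 2 → ℝ) (i : Fin 2),
        (∑ j : Fin 2, fderiv ℝ (fun y => D y i j) x (Pi.single j 1))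
          ≠ 2 * (∑ l : Fin 2, σ x i l *
              (∑ j : Fin 2, fderiv ℝ (fun y => σ y j l) x (Pi.single j 1)))) := by
  have hgen : ∀ (g : ℝ → ℝ), ContDiff ℝ 1 g → ∀ (i : Fin 2) (x : Fin 2 → ℝ),
      HasFDerivAt (fun y : Fin 2 → ℝ => g (y i))
        (deriv g (x i) • (ContinuousLinearMap.proj i : (Fin 2 → ℝ) →L[ℝ] ℝ)) x := by
    intro g hg i x
    have h1 : HasDerivAt g (deriv g (x i)) (x i) :=
      (hg.differentiable one_ne_zero (x i)).hasDerivAt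
    have h2 : HasFDerivAt (fun y : Fin 2 → ℝ => y i)
        (ContinuousLinearMap.proj i : (Fin 2 → ℝ) →L[ℝ] ℝ) x :=
      (ContinuousLinearMap.proj i : (Fin 2 → ℝ) →L[ℝ] ℝ).hasFDerivAt
    exact h1.comp_hasFDerivAt x h2
  have main : ∀ x : Fin 2 → ℝ,
      ((∑ j : Fin 2, fderiv ℝ (fun y => D y 0 j) x (Pi.single j 1))
          - 2 * (∑ l : Fin 2, σ x 0 l *
              (∑ j : Fin 2, fderiv ℝ (fun y => σ y j l) x (Pi.single j 1)))
        = -ε * deriv b (x 1)) ∧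
      ((∑ j : Fin 2, fderiv ℝ (fun y => D y 1 j) x (Pi.single j 1))
          - 2 * (∑ l : Fin 2, σ x 1 l *
              (∑ j : Fin 2, fderiv ℝ (fun y => σ y j l) x (Pi.single j 1)))
        = -ε * deriv a (x 0)) := by
    intro x
    have hA := hgen a ha 0 x
    have hB := hgen b hb 1 x
    -- σ entry fderivs
    have s00 : fderiv ℝ (fun y => σ y 0 0) x (Pi.single (0:Fin 2) 1) = deriv a (x 0) := by
      have h : (fun y => σ y 0 0) = fun y : Fin 2 → ℝ => a (y 0) := by
        funext y; simp [hσ]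
      rw [h, hA.fderiv]; simp
    have s10 : fderiv ℝ (fun y => σ y 1 0) x (Pi.single (1:Fin 2) 1) = 0 := by
      have h : (fun y => σ y 1 0) = fun _ : Fin 2 → ℝ => ε := by
        funext y; simp [hσ]
      rw [h, fderiv_fun_const]; simp
    have s01 : fderiv ℝ (fun y => σ y 0 1) x (Pi.single (0:Fin 2) 1) = 0 := by
      have h : (fun y => σ y 0 1) = fun _ : Fin 2 → ℝ => ε := by
        funext y; simp [hσ]
      rw [h, fderiv_fun_const]; simp
    have s11 : fderiv ℝ (fun y => σ y 1 1) x (Pi.single (1:Fin 2) 1) = deriv b (x 1) := by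
      have h : (fun y => σ y 1 1) = fun y : Fin 2 → ℝ => b (y 1) := by
        funext y; simp [hσ]
      rw [h, hB.fderiv]; simp
    -- D entry fderivs
    have d00 : fderiv ℝ (fun y => D y 0 0) x (Pi.single (0:Fin 2) 1)
        = 2 * (a (x 0) * deriv a (x 0)) := by
      have h : (fun y => D y 0 0) = fun y : Fin 2 → ℝ => a (y 0) * a (y 0) + ε * ε := by
        funext y; simp [hD, hσ, Matrix.mul_apply, Fin.sum_univ_two, Matrix.transpose_apply, Matrix.vecHead, Matrix.vecTail]
      rw [h, ((hA.fun_mul hA).add_const (ε * ε)).fderiv]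
      simp; ring
    have d01 : fderiv ℝ (fun y => D y 0 1) x (Pi.single (1:Fin 2) 1)
        = ε * deriv b (x 1) := by
      have h : (fun y => D y 0 1) = fun y : Fin 2 → ℝ => a (y 0) * ε + ε * b (y 1) := by
        funext y; simp [hD, hσ, Matrix.mul_apply, Fin.sum_univ_two, Matrix.transpose_apply, Matrix.vecHead, Matrix.vecTail]
      rw [h, ((hA.mul_const ε).fun_add (hB.const_mul ε)).fderiv]
      simp
    have d10 : fderiv ℝ (fun y => D y 1 0) x (Pi.single (0:Fin 2) 1)
        = ε * deriv a (x 0) := by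
      have h : (fun y => D y 1 0) = fun y : Fin 2 → ℝ => ε * a (y 0) + b (y 1) * ε := by
        funext y; simp [hD, hσ, Matrix.mul_apply, Fin.sum_univ_two, Matrix.transpose_apply, Matrix.vecHead, Matrix.vecTail]
      rw [h, ((hA.const_mul ε).fun_add (hB.mul_const ε)).fderiv]
      simp
    have d11 : fderiv ℝ (fun y => D y 1 1) x (Pi.single (1:Fin 2) 1)
        = 2 * (b (x 1) * deriv b (x 1)) := by
      have h : (fun y => D y 1 1) = fun y : Fin 2 → ℝ => ε * ε + b (y 1) * b (y 1) := by
        funext y; simp [hD, hσ, Matrix.mul_apply, Fin.sum_univ_two, Matrix.transpose_apply, Matrix.vecHead, Matrix.vecTail]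
      rw [h, ((hB.fun_mul hB).const_add (ε * ε)).fderiv]
      simp; ring
    constructor
    · simp only [Fin.sum_univ_two]
      rw [d00, d01, s00, s10, s01, s11, hσ]
      simp [Matrix.cons_val_zero, Matrix.cons_val_one]
      ring
    · simp only [Fin.sum_univ_two]
      rw [d10, d11, s00, s10, s01, s11, hσ]
      simp [Matrix.cons_val_zero, Matrix.cons_val_one]
      ring
  refine ⟨main, ?_⟩
  rintro (⟨s, hs⟩ | ⟨s, hs⟩)
  · refine ⟨![s, 0], 1, fun heq => ?_⟩
    have h2 := (main ![s, 0]).2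
    rw [heq, sub_self] at h2
    simp at h2
    rcases h2 with h2 | h2
    · exact hε h2
    · exact hs h2
  · refine ⟨![0, s], 0, fun heq => ?_⟩
    have h1 := (main ![0, s]).1
    rw [heq, sub_self] at h1
    simp at h1
    rcases h1 with h1 | h1
    · exact hε h1
    · exact hs h1
end
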